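/- Suppose matrix sequences a_n(t), b_n(t) satisfy the compatibility of x P_n = P_{n+1} + a_n P_n + b_n P_{n-1} with ∂_{t_2} P_n = -(a_n b_n + b_n a_{n-1}) P_{n-1} - b_n b_{n-1} P_{n-2}. Then ∂_{t_2} a_n = a_{n+1} b_{n+1} + b_{n+1} a_n - a_n b_n - b_n a_{n-1} and ∂_{t_2} b_n = a_n^2 b_n - b_n a_{n-1}^2 + b_{n+1} b_n - b_n b_{n-1}. -/

import Mathlib

open Polynomial

private theorem eqsub {M : Type*} [AddCommGroup M] {x y l r : M}
    (h : l = r) (hid : x - y = l - r) : x = y := by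
  rw [h, sub_self, sub_eq_zero] at hid; exact hid

private theorem matmul_deriv {p : ℕ} {f g : ℝ → Matrix (Fin p) (Fin p) ℝ}
    {F G : Matrix (Fin p) (Fin p) ℝ} {t : ℝ}
    (hf : ∀ i j, HasDerivAt (fun s => f s i j) (F i j) t)
    (hg : ∀ i j, HasDerivAt (fun s => g s i j) (G i j) t) (i j : Fin p) :
    HasDerivAt (fun s => (f s * g s) i j) ((F * g t + f t * G) i j) t := by
  have h : HasDerivAt (fun s => ∑ x : Fin p, f s i x * g s x j)
      (∑ x : Fin p, (F i x * g t x j + f t i x * G x j)) t :=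
    HasDerivAt.fun_sum (fun x _ => (hf i x).mul (hg x j))
  simp only [Matrix.mul_apply, Matrix.add_apply]
  simpa [Finset.sum_add_distrib] using h

/-- Compatibility of `x P_n = P_{n+1} + a_n P_n + b_n P_{n-1}` with the `t₂`-evolution
`∂_{t₂} P_n = -(a_n b_n + b_n a_{n-1}) P_{n-1} - b_n b_{n-1} P_{n-2}` yields the second
flow of the non-abelian Toda hierarchy:
`∂_{t₂} a_n = a_{n+1} b_{n+1} + b_{n+1} a_n - a_n b_n - b_n a_{n-1}` and
`∂_{t₂} b_n = a_n² b_n - b_n a_{n-1}² + b_{n+1} b_n - b_n b_{n-1}`.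
Polynomials are indexed by `ℤ`, vanish for negative index (`P_{-1} = P_{-2} = 0`),
are monic of degree `n` for `n ≥ 0`, and `b_n = 0` for `n ≤ 0` (semi-infinite
convention); derivatives of matrix entries are entrywise. -/
theorem stmt9 {p : ℕ}
    (P : ℝ → ℤ → Polynomial (Matrix (Fin p) (Fin p) ℝ))
    (a b a' b' : ℤ → ℝ → Matrix (Fin p) (Fin p) ℝ)
    (hneg : ∀ t n, n < 0 → P t n = 0)
    (hmonic : ∀ t (n : ℤ), 0 ≤ n → (P t n).Monic ∧ ((P t n).natDegree : ℤ) = n)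
    (hb0 : ∀ t (n : ℤ), n ≤ 0 → b n t = 0)
    (hrec : ∀ t (n : ℤ), 0 ≤ n →
      X * P t n = P t (n + 1) + C (a n t) * P t n + C (b n t) * P t (n - 1))
    (hda : ∀ n t i j, HasDerivAt (fun s => a n s i j) (a' n t i j) t)
    (hdb : ∀ n t i j, HasDerivAt (fun s => b n s i j) (b' n t i j) t)
    (hdP : ∀ (n : ℤ) t k i j, 0 ≤ n →
      HasDerivAt (fun s => (P s n).coeff k i j)
        (((-(a n t * b n t + b n t * a (n - 1) t)) * (P t (n - 1)).coeff k
          - b n t * b (n - 1) t * (P t (n - 2)).coeff k) i j) t) :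
    ∀ (n : ℤ) t, 0 ≤ n →
      a' n t = a (n + 1) t * b (n + 1) t + b (n + 1) t * a n t
        - a n t * b n t - b n t * a (n - 1) t ∧
      b' n t = a n t * a n t * b n t - b n t * (a (n - 1) t * a (n - 1) t)
        + b (n + 1) t * b n t - b n t * b (n - 1) t := by
  intro n t hn
  obtain ⟨N, rfl⟩ := Int.eq_ofNat_of_zero_le hn
  obtain ⟨A, hA⟩ : ∃ A : ℤ → Matrix (Fin p) (Fin p) ℝ,
      ∀ m, A m = -(a m t * b m t + b m t * a (m - 1) t) := ⟨_, fun _ => rfl⟩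
  obtain ⟨B, hB⟩ : ∃ B : ℤ → Matrix (Fin p) (Fin p) ℝ,
      ∀ m, B m = -(b m t * b (m - 1) t) := ⟨_, fun _ => rfl⟩
  -- vanishing coefficients
  have hc0 : ∀ (m : ℤ) (k : ℕ), m < (k : ℤ) → (P t m).coeff k = 0 := by
    intro m k h
    rcases lt_or_ge m 0 with hm | hm
    · rw [hneg t m hm]; simp
    · obtain ⟨hmon, hdeg⟩ := hmonic t m hm
      apply Polynomial.coeff_eq_zero_of_natDegree_lt
      omega
  -- leading coefficients
  have hlead : ∀ (m : ℤ) (k : ℕ), (k : ℤ) = m → (P t m).coeff k = 1 := by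
    intro m k hk
    have hm : 0 ≤ m := by omega
    obtain ⟨hmon, hdeg⟩ := hmonic t m hm
    have hnd : (P t m).natDegree = k := by omega
    rw [← hnd]; exact hmon.coeff_natDegree
  -- entrywise derivative of coefficients, for all integer indices
  have hD : ∀ (m : ℤ) (k : ℕ) (i j : Fin p),
      HasDerivAt (fun s => (P s m).coeff k i j)
        ((A m * (P t (m - 1)).coeff k + B m * (P t (m - 2)).coeff k) i j) t := by
    intro m k i j
    rcases le_or_gt 0 m with hm | hm
    · have hv : A m * (P t (m - 1)).coeff k + B m * (P t (m - 2)).coeff k =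
          (-(a m t * b m t + b m t * a (m - 1) t)) * (P t (m - 1)).coeff k
            - b m t * b (m - 1) t * (P t (m - 2)).coeff k := by
        simp only [hA, hB, neg_mul, ← sub_eq_add_neg]
      rw [hv]; exact hdP m t k i j hm
    · have he : (fun s => (P s m).coeff k i j) = fun _ => (0 : ℝ) := by
        funext s; rw [hneg s m hm]; simp
      rw [hneg t (m - 1) (by omega), hneg t (m - 2) (by omega), he]
      simpa using hasDerivAt_const t (0 : ℝ)
  -- coefficientwise recurrence
  have hrecc : ∀ (m : ℤ), 0 ≤ m → ∀ (s : ℝ) (k : ℕ),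
      (X * P s m).coeff k = (P s (m + 1)).coeff k + a m s * (P s m).coeff k
        + b m s * (P s (m - 1)).coeff k := by
    intro m hm s k
    have h := congrArg (fun q : Polynomial (Matrix (Fin p) (Fin p) ℝ) => q.coeff k)
      (hrec s m hm)
    simpa [Polynomial.coeff_add, Polynomial.coeff_C_mul] using h
  -- the compatibility equation, coefficient of degree k+1
  have hES : ∀ (m : ℤ), 0 ≤ m → ∀ k : ℕ,
      A m * (P t (m - 1)).coeff k + B m * (P t (m - 2)).coeff k =
        (A (m + 1) * (P t (m + 1 - 1)).coeff (k + 1)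
            + B (m + 1) * (P t (m + 1 - 2)).coeff (k + 1))
        + (a' m t * (P t m).coeff (k + 1)
            + a m t * (A m * (P t (m - 1)).coeff (k + 1) + B m * (P t (m - 2)).coeff (k + 1)))
        + (b' m t * (P t (m - 1)).coeff (k + 1)
            + b m t * (A (m - 1) * (P t (m - 1 - 1)).coeff (k + 1)
                + B (m - 1) * (P t (m - 1 - 2)).coeff (k + 1))) := by
    intro m hm k
    ext i j
    have h2' : HasDerivAt
        (fun s => (P s (m + 1)).coeff (k + 1) i j + (a m s * (P s m).coeff (k + 1)) i j
          + (b m s * (P s (m - 1)).coeff (k + 1)) i j)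
        (((A (m + 1) * (P t (m + 1 - 1)).coeff (k + 1)
            + B (m + 1) * (P t (m + 1 - 2)).coeff (k + 1)) i j
          + (a' m t * (P t m).coeff (k + 1)
            + a m t * (A m * (P t (m - 1)).coeff (k + 1)
              + B m * (P t (m - 2)).coeff (k + 1))) i j)
          + (b' m t * (P t (m - 1)).coeff (k + 1)
            + b m t * (A (m - 1) * (P t (m - 1 - 1)).coeff (k + 1)
              + B (m - 1) * (P t (m - 1 - 2)).coeff (k + 1))) i j) t :=
      ((hD (m + 1) (k + 1) i j).add
        (matmul_deriv (fun i' j' => hda m t i' j') (fun i' j' => hD m (k + 1) i' j') i j)).add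
        (matmul_deriv (fun i' j' => hdb m t i' j') (fun i' j' => hD (m - 1) (k + 1) i' j') i j)
    have hfe : (fun s => (P s m).coeff k i j)
        = (fun s => (P s (m + 1)).coeff (k + 1) i j + (a m s * (P s m).coeff (k + 1)) i j
          + (b m s * (P s (m - 1)).coeff (k + 1)) i j) := by
      funext s
      rw [← Matrix.add_apply, ← Matrix.add_apply, ← hrecc m hm s (k + 1),
        Polynomial.coeff_X_mul]
    have h := (hD m k i j).unique (hfe.symm ▸ h2')
    simpa only [Matrix.add_apply] using h
  -- the compatibility equation, coefficient of degree 0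
  have hE0 : ∀ (m : ℤ), 0 ≤ m →
      (0 : Matrix (Fin p) (Fin p) ℝ) =
        (A (m + 1) * (P t (m + 1 - 1)).coeff 0
            + B (m + 1) * (P t (m + 1 - 2)).coeff 0)
        + (a' m t * (P t m).coeff 0
            + a m t * (A m * (P t (m - 1)).coeff 0 + B m * (P t (m - 2)).coeff 0))
        + (b' m t * (P t (m - 1)).coeff 0
            + b m t * (A (m - 1) * (P t (m - 1 - 1)).coeff 0
                + B (m - 1) * (P t (m - 1 - 2)).coeff 0)) := by
    intro m hm
    ext i j
    have h2' : HasDerivAt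
        (fun s => (P s (m + 1)).coeff 0 i j + (a m s * (P s m).coeff 0) i j
          + (b m s * (P s (m - 1)).coeff 0) i j)
        (((A (m + 1) * (P t (m + 1 - 1)).coeff 0
            + B (m + 1) * (P t (m + 1 - 2)).coeff 0) i j
          + (a' m t * (P t m).coeff 0
            + a m t * (A m * (P t (m - 1)).coeff 0 + B m * (P t (m - 2)).coeff 0)) i j)
          + (b' m t * (P t (m - 1)).coeff 0
            + b m t * (A (m - 1) * (P t (m - 1 - 1)).coeff 0
              + B (m - 1) * (P t (m - 1 - 2)).coeff 0)) i j) t :=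
      ((hD (m + 1) 0 i j).add
        (matmul_deriv (fun i' j' => hda m t i' j') (fun i' j' => hD m 0 i' j') i j)).add
        (matmul_deriv (fun i' j' => hdb m t i' j') (fun i' j' => hD (m - 1) 0 i' j') i j)
    have hfe : (fun _ : ℝ => (0 : ℝ))
        = (fun s => (P s (m + 1)).coeff 0 i j + (a m s * (P s m).coeff 0) i j
          + (b m s * (P s (m - 1)).coeff 0) i j) := by
      funext s
      rw [← Matrix.add_apply, ← Matrix.add_apply, ← hrecc m hm s 0]
      simp [Polynomial.mul_coeff_zero, Polynomial.coeff_X_zero]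
    have h := (hasDerivAt_const t (0 : ℝ)).unique (hfe.symm ▸ h2')
    simpa only [Matrix.add_apply, Matrix.zero_apply] using h
  -- the first Toda equation, in terms of A
  have ha'Z : ∀ (m : ℤ), 0 ≤ m → a' m t = A m - A (m + 1) := by
    intro m hm
    rcases eq_or_lt_of_le hm with h0 | h1
    · obtain rfl : m = 0 := h0.symm
      have h := hE0 0 le_rfl
      norm_num at h
      rw [hlead 0 0 (by omega), hc0 (-1) 0 (by omega), hc0 (-2) 0 (by omega),
        hc0 (-3) 0 (by omega)] at h
      refine eqsub h.symm ?_
      simp only [hA, hB]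
      norm_num [hb0 t 0 le_rfl]
      noncomm_ring
    · obtain ⟨M, hM⟩ := Int.eq_ofNat_of_zero_le (by omega : (0 : ℤ) ≤ m - 1)
      have hm1 : m = (M : ℤ) + 1 := by omega
      subst hm1
      have h := hES ((M : ℤ) + 1) (by omega) M
      simp only [add_sub_cancel_right] at h
      rw [hlead (M : ℤ) M (by omega), hlead ((M : ℤ) + 1) (M + 1) (by omega),
        hc0 ((M : ℤ) + 1 - 2) M (by omega), hc0 ((M : ℤ) + 1 - 2) (M + 1) (by omega),
        hc0 ((M : ℤ) + 1 + 1 - 2) (M + 1) (by omega), hc0 (M : ℤ) (M + 1) (by omega),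
        hc0 ((M : ℤ) - 1) (M + 1) (by omega), hc0 ((M : ℤ) - 2) (M + 1) (by omega)] at h
      refine (eqsub h ?_).symm
      noncomm_ring
  refine ⟨?_, ?_⟩
  · -- the a' equation
    rw [ha'Z (N : ℤ) (Int.natCast_nonneg N)]
    simp only [hA, add_sub_cancel_right]
    abel
  · -- the b' equation
    rcases Nat.lt_or_ge N 2 with hN | hN
    · interval_cases N
      · -- N = 0
        simp only [Nat.cast_zero]
        have hb'0 : b' 0 t = 0 := by
          ext i j
          have h0 : HasDerivAt (fun s => b 0 s i j) 0 t := by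
            have he : (fun s => b 0 s i j) = fun _ => (0 : ℝ) := by
              funext s; rw [hb0 s 0 le_rfl]; simp
            rw [he]; exact hasDerivAt_const t 0
          have := (hdb 0 t i j).unique h0
          simpa using this
        rw [hb'0]
        simp [hb0 t 0 le_rfl]
      · -- N = 1
        simp only [Nat.cast_one]
        have h9 := hrecc 0 le_rfl t 0
        have hx : (X * P t (0 : ℤ)).coeff 0 = 0 := by
          rw [Polynomial.mul_coeff_zero, Polynomial.coeff_X_zero, zero_mul]
        rw [hx, hlead 0 0 (by omega)] at h9
        norm_num at h9
        rw [hneg t (-1) (by omega)] at h9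
        simp only [Polynomial.coeff_zero, mul_zero, add_zero, mul_one] at h9
        have hL0 : (P t (1 : ℤ)).coeff 0 = -(a 0 t) :=
          eq_neg_of_add_eq_zero_left h9.symm
        have h := hE0 1 (by omega)
        norm_num at h
        rw [hL0, hlead 0 0 (by omega), hc0 (-1) 0 (by omega), hc0 (-2) 0 (by omega),
          ha'Z 1 (by omega)] at h
        refine eqsub h.symm ?_
        simp only [hA, hB]
        norm_num [hb0 t 0 le_rfl]
        noncomm_ring
    · -- N ≥ 2
      obtain ⟨K, rfl⟩ : ∃ K, N = K + 2 := ⟨N - 2, by omega⟩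
      have h := hES ((K + 2 : ℕ) : ℤ) (Int.natCast_nonneg _) K
      simp only [add_sub_cancel_right] at h
      have h9 := hrecc (((K + 2 : ℕ) : ℤ) - 1) (by omega) t (K + 1)
      rw [Polynomial.coeff_X_mul] at h9
      rw [show ((K + 2 : ℕ) : ℤ) - 1 + 1 = ((K + 2 : ℕ) : ℤ) from by ring] at h9
      rw [hlead (((K + 2 : ℕ) : ℤ) - 1) (K + 1) (by omega),
        hc0 (((K + 2 : ℕ) : ℤ) - 1 - 1) (K + 1) (by omega)] at h9
      simp only [mul_one, mul_zero, add_zero] at h9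
      rw [hlead (((K + 2 : ℕ) : ℤ) - 2) K (by omega),
        hlead (((K + 2 : ℕ) : ℤ) - 1) (K + 1) (by omega),
        hlead (((K + 2 : ℕ) : ℤ) + 1 - 2) (K + 1) (by omega),
        hc0 (((K + 2 : ℕ) : ℤ) - 2) (K + 1) (by omega),
        hc0 (((K + 2 : ℕ) : ℤ) - 1 - 1) (K + 1) (by omega),
        hc0 (((K + 2 : ℕ) : ℤ) - 1 - 2) (K + 1) (by omega),
        h9, ha'Z ((K + 2 : ℕ) : ℤ) (Int.natCast_nonneg _)] at h
      refine eqsub h.symm ?_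
      simp only [hA, hB, add_sub_cancel_right]
      noncomm_ring
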